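/- Let α, h, K be positive real constants. Then α·x − 1 + e^{−αx} > 0 for every x > 0; the map ψ(x) := K·α² / (h·(α·x − 1 + e^{−αx})) is a continuous, strictly decreasing bijection from (0,∞) onto (0,∞); and for every x > 0, x is the unique solution in (0,∞) of the equation (ψ(x)·h/α)·(1 − e^{−αy}) = ψ(x)·h·y − K·α (in the unknown y), i.e. x = x_{ψ(x)}. -/

import Mathlib

/-- The bijection `ψ(x) = K·α² / (h·(α·x - 1 + e^{-αx}))` between thresholds and
Lagrange multipliers in the fluid-queue example. -/
noncomputable def psi (α h K x : ℝ) : ℝ :=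
  K * α ^ 2 / (h * (α * x - 1 + Real.exp (-α * x)))

/-- Let `α, h, K > 0`.  Then `α·x - 1 + e^{-αx} > 0` for every
`x > 0`; the map `ψ(x) = K·α²/(h·(αx - 1 + e^{-αx}))` is a continuous, strictly
decreasing bijection from `(0,∞)` onto `(0,∞)`; and for every `x > 0`, `x` is the
unique solution `y ∈ (0,∞)` of `(ψ(x)·h/α)(1 - e^{-αy}) = ψ(x)·h·y - K·α`,
i.e. `x = x_{ψ(x)}`. -/
theorem stmt14 (α h K : ℝ) (hα : 0 < α) (hh : 0 < h) (hK : 0 < K) :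
    (∀ x : ℝ, 0 < x → 0 < α * x - 1 + Real.exp (-α * x)) ∧
    ContinuousOn (psi α h K) (Set.Ioi 0) ∧
    StrictAntiOn (psi α h K) (Set.Ioi 0) ∧
    Set.BijOn (psi α h K) (Set.Ioi 0) (Set.Ioi 0) ∧
    ∀ x : ℝ, 0 < x → ∀ y : ℝ,
      (0 < y ∧
        psi α h K x * h / α * (1 - Real.exp (-α * y)) = psi α h K x * h * y - K * α)
      ↔ y = x := by
  have hα' : α ≠ 0 := hα.ne'
  set F : ℝ → ℝ := fun x => α * x - 1 + Real.exp (-α * x) with hFdef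
  have hpsi : ∀ x, psi α h K x = K * α ^ 2 / (h * F x) := fun x => rfl
  have hF0 : F 0 = 0 := by simp [hFdef]
  have hFc : Continuous F := by
    simp only [hFdef]; continuity
  have hFd : ∀ x : ℝ, HasDerivAt F (α - α * Real.exp (-α * x)) x := by
    intro x
    have h1 : HasDerivAt (fun x : ℝ => -α * x) (-α) x := by
      simpa using (hasDerivAt_id x).const_mul (-α)
    have h2 := h1.exp
    have h3 : HasDerivAt (fun x : ℝ => α * x - 1) α x := by
      simpa using ((hasDerivAt_id x).const_mul α).sub_const 1
    exact (h3.add h2).congr_deriv (by ring)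
  have hFmono : StrictMonoOn F (Set.Ici 0) := by
    apply strictMonoOn_of_deriv_pos (convex_Ici 0) hFc.continuousOn
    intro x hx
    rw [interior_Ici] at hx
    rw [(hFd x).deriv]
    have : Real.exp (-α * x) < 1 := by
      rw [Real.exp_lt_one_iff]
      nlinarith [hx.out]
    nlinarith
  have hFpos : ∀ x : ℝ, 0 < x → 0 < F x := by
    intro x hx
    have := hFmono (Set.self_mem_Ici) (le_of_lt hx) hx
    rwa [hF0] at this
  have hpsipos : ∀ x : ℝ, 0 < x → 0 < psi α h K x := by
    intro x hx
    rw [hpsi]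
    exact div_pos (by positivity) (by have := hFpos x hx; positivity)
  refine ⟨hFpos, ?_, ?_, ?_, ?_⟩
  · -- continuity
    apply ContinuousOn.div continuousOn_const
      (continuousOn_const.mul hFc.continuousOn)
    intro x hx
    have := hFpos x hx
    exact (mul_pos hh this).ne'
  · -- strict anti
    intro a ha b hb hab
    rw [hpsi, hpsi]
    apply div_lt_div_of_pos_left (by positivity) (by have := hFpos a ha; positivity)
    have := hFmono (le_of_lt ha.out) (le_of_lt hb.out) hab
    nlinarith [hFpos a ha]
  · -- bijection
    refine ⟨fun x hx => hpsipos x hx, ?_, ?_⟩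
    · -- injective: strictAntiOn implies injOn
      intro a ha b hb hab
      by_contra hne
      rcases lt_or_gt_of_ne hne with hlt | hlt
      · have h1 : psi α h K b < psi α h K a := by
          rw [hpsi, hpsi]
          apply div_lt_div_of_pos_left (by positivity) (by have := hFpos a ha; positivity)
          have := hFmono (le_of_lt ha.out) (le_of_lt hb.out) hlt
          nlinarith [hFpos a ha]
        exact absurd hab (by linarith)
      · have h1 : psi α h K a < psi α h K b := by
          rw [hpsi, hpsi]
          apply div_lt_div_of_pos_left (by positivity) (by have := hFpos b hb; positivity)
          have := hFmono (le_of_lt hb.out) (le_of_lt ha.out) hlt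
          nlinarith [hFpos b hb]
        exact absurd hab (by linarith)
    · -- surjective
      intro g hg
      have hg0 : (0:ℝ) < g := hg
      set t : ℝ := K * α ^ 2 / (h * g) with ht
      have ht0 : 0 < t := by positivity
      set b : ℝ := (t + 1) / α with hb
      have hb0 : 0 < b := by positivity
      have hFb : t ≤ F b := by
        have he : 0 < Real.exp (-α * b) := Real.exp_pos _
        have : α * b = t + 1 := by
          rw [hb]; field_simp
        simp only [hFdef]
        nlinarith
      have hIVT := intermediate_value_Icc (le_of_lt hb0) hFc.continuousOn
      have htmem : t ∈ Set.Icc (F 0) (F b) := by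
        rw [hF0]; exact ⟨le_of_lt ht0, hFb⟩
      obtain ⟨x, hxmem, hFx⟩ := hIVT htmem
      have hx0 : 0 < x := by
        rcases eq_or_lt_of_le hxmem.1 with he | hl
        · exfalso; rw [← he, hF0] at hFx; linarith
        · exact hl
      refine ⟨x, hx0, ?_⟩
      rw [hpsi, hFx, ht]
      field_simp
  · -- uniqueness
    intro x hx y
    have hFx := hFpos x hx
    have hgh : psi α h K x * (h * F x) = K * α ^ 2 := by
      rw [hpsi]
      field_simp
    constructor
    · rintro ⟨hy, heq⟩
      rw [div_mul_eq_mul_div, div_eq_iff hα'] at heq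
      have hFyx : F y = F x := by
        have hph := hpsipos x hx
        have key : psi α h K x * h * F y = psi α h K x * h * F x := by
          simp only [hFdef]
          linear_combination -heq - hgh
        have hne : psi α h K x * h ≠ 0 := by positivity
        exact mul_left_cancel₀ hne key
      exact hFmono.injOn (le_of_lt hy) (le_of_lt hx) hFyx
    · rintro rfl
      refine ⟨hx, ?_⟩
      rw [div_mul_eq_mul_div, div_eq_iff hα']
      simp only [hFdef] at hgh
      linear_combination -hgh
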